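/- Let (u,τ,S) be a classical (C¹) solution of the full compressible Euler equations τ_t − u_x = 0, u_t + p_x = 0, S_t = 0 (p = K e^{S/c_v} τ^{−γ}) on an open subset of ℝ×ℝ with τ > 0. Then at every point of the domain: η_t + c·η_x = −K_c·η^{(γ+1)/(γ−1)}·β − ((γ−1)/γ)·K_c·η^{2γ/(γ−1)}·m_x and η_t − c·η_x = −K_c·η^{(γ+1)/(γ−1)}·α + ((γ−1)/γ)·K_c·η^{2γ/(γ−1)}·m_x. -/

import Mathlib

open Real Set MeasureTheory

noncomputable section

/-- Partial derivative in the spatial variable `x`. -/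
def pdx (f : ℝ → ℝ → ℝ) (x t : ℝ) : ℝ := deriv (fun y => f y t) x

/-- Partial derivative in the time variable `t`. -/
def pdt (f : ℝ → ℝ → ℝ) (x t : ℝ) : ℝ := deriv (fun s => f x s) t

/-- The time strip `ℝ × [0, T)`, where `T` is a real number or `+∞`. -/
def strip (T : EReal) : Set (ℝ × ℝ) := {p : ℝ × ℝ | 0 ≤ p.2 ∧ (p.2 : EReal) < T}

/-- `η = (2√(Kγ)/(γ−1)) τ^{−(γ−1)/2}`. -/
def etaP (K γ : ℝ) (τ : ℝ → ℝ → ℝ) (x t : ℝ) : ℝ :=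
  2 * Real.sqrt (K * γ) / (γ - 1) * τ x t ^ (-(γ - 1) / 2)

/-- Gradient variable `α = s_x = u_x + η_x` for the p-system. -/
def alphaP (K γ : ℝ) (u τ : ℝ → ℝ → ℝ) (x t : ℝ) : ℝ :=
  pdx u x t + pdx (etaP K γ τ) x t

/-- Gradient variable `β = r_x = u_x − η_x` for the p-system. -/
def betaP (K γ : ℝ) (u τ : ℝ → ℝ → ℝ) (x t : ℝ) : ℝ :=
  pdx u x t - pdx (etaP K γ τ) x t

/-- The p-system `τ_t − u_x = 0`, `u_t + p_x = 0` with `p = K τ^{−γ}`, at the point `(x,t)`. -/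
def pSystem (K γ : ℝ) (u τ : ℝ → ℝ → ℝ) (x t : ℝ) : Prop :=
  pdt τ x t - pdx u x t = 0 ∧
  pdt u x t + pdx (fun y s => K * τ y s ^ (-γ)) x t = 0

/-- Riemann invariant `s = u + η`. -/
def sRi (K γ : ℝ) (u τ : ℝ → ℝ → ℝ) (x t : ℝ) : ℝ := u x t + etaP K γ τ x t

/-- Riemann invariant `r = u − η`. -/
def rRi (K γ : ℝ) (u τ : ℝ → ℝ → ℝ) (x t : ℝ) : ℝ := u x t - etaP K γ τ x t

/-- The Lagrangian wave speed `c = √(Kγ) τ^{−(γ+1)/2}`. -/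
def cP (K γ : ℝ) (τ : ℝ → ℝ → ℝ) (x t : ℝ) : ℝ :=
  Real.sqrt (K * γ) * τ x t ^ (-(γ + 1) / 2)

/-- The constant `K_τ = (2√(Kγ)/(γ−1))^{2/(γ−1)}`. -/
def KtauC (K γ : ℝ) : ℝ := (2 * Real.sqrt (K * γ) / (γ - 1)) ^ (2 / (γ - 1))

/-- The constant `K_c = √(Kγ) K_τ^{−(γ+1)/2}`. -/
def KcC (K γ : ℝ) : ℝ := Real.sqrt (K * γ) * KtauC K γ ^ (-(γ + 1) / 2)

/-- `k₁ = ((γ+1)K_c/(2(γ−1))) η^{2/(γ−1)}`. -/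
def k1P (K γ : ℝ) (τ : ℝ → ℝ → ℝ) (x t : ℝ) : ℝ :=
  (γ + 1) * KcC K γ / (2 * (γ - 1)) * etaP K γ τ x t ^ (2 / (γ - 1))
/-- `m = e^{S/(2c_v)}`. -/
def mF (cv : ℝ) (S : ℝ → ℝ → ℝ) (x t : ℝ) : ℝ := Real.exp (S x t / (2 * cv))

/-- The ideal polytropic pressure `p = K e^{S/c_v} τ^{−γ}`. -/
def pF (K cv γ : ℝ) (τ S : ℝ → ℝ → ℝ) (x t : ℝ) : ℝ :=
  K * Real.exp (S x t / cv) * τ x t ^ (-γ)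

/-- The full compressible Euler equations `τ_t − u_x = 0`, `u_t + p_x = 0`, `S_t = 0`
with `p = K e^{S/c_v} τ^{−γ}`, at the point `(x,t)`. -/
def fullEuler (K cv γ : ℝ) (u τ S : ℝ → ℝ → ℝ) (x t : ℝ) : Prop :=
  pdt τ x t - pdx u x t = 0 ∧
  pdt u x t + pdx (pF K cv γ τ S) x t = 0 ∧
  pdt S x t = 0

/-- Wave speed `c = K_c m η^{(γ+1)/(γ−1)}` for the full Euler equations. -/
def cF (K cv γ : ℝ) (τ S : ℝ → ℝ → ℝ) (x t : ℝ) : ℝ :=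
  KcC K γ * mF cv S x t * etaP K γ τ x t ^ ((γ + 1) / (γ - 1))

/-- Gradient variable `α = u_x + m η_x + ((γ−1)/γ) m_x η` for the full Euler equations. -/
def alphaF (K cv γ : ℝ) (u τ S : ℝ → ℝ → ℝ) (x t : ℝ) : ℝ :=
  pdx u x t + mF cv S x t * pdx (etaP K γ τ) x t
    + (γ - 1) / γ * pdx (mF cv S) x t * etaP K γ τ x t

/-- Gradient variable `β = u_x − m η_x − ((γ−1)/γ) m_x η` for the full Euler equations. -/
def betaF (K cv γ : ℝ) (u τ S : ℝ → ℝ → ℝ) (x t : ℝ) : ℝ :=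
  pdx u x t - mF cv S x t * pdx (etaP K γ τ) x t
    - (γ - 1) / γ * pdx (mF cv S) x t * etaP K γ τ x t

/-- `k₂ = ((γ−1)/(γ(γ+1))) η m_x`. -/
def k2F (K cv γ : ℝ) (τ S : ℝ → ℝ → ℝ) (x t : ℝ) : ℝ :=
  (γ - 1) / (γ * (γ + 1)) * etaP K γ τ x t * pdx (mF cv S) x t

/-- Weighted gradient variable `α_ε = η^{2ε/(γ−1)} α`. -/
def aeps (K cv γ ε : ℝ) (u τ S : ℝ → ℝ → ℝ) (x t : ℝ) : ℝ :=
  etaP K γ τ x t ^ (2 * ε / (γ - 1)) * alphaF K cv γ u τ S x t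

/-- Weighted gradient variable `β_ε = η^{2ε/(γ−1)} β`. -/
def beps (K cv γ ε : ℝ) (u τ S : ℝ → ℝ → ℝ) (x t : ℝ) : ℝ :=
  etaP K γ τ x t ^ (2 * ε / (γ - 1)) * betaF K cv γ u τ S x t

/-- `k_{1ε} = ((γ+1)K_c/(2(γ−1))) η^{(2/(γ−1))(1−ε)}`. -/
def k1e (K γ ε : ℝ) (τ : ℝ → ℝ → ℝ) (x t : ℝ) : ℝ :=
  (γ + 1) * KcC K γ / (2 * (γ - 1)) * etaP K γ τ x t ^ (2 / (γ - 1) * (1 - ε))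

/-- `k_{2ε} = ((γ−1)/(γ(γ+1))) η^{1+2ε/(γ−1)} m_x`. -/
def k2e (K cv γ ε : ℝ) (τ S : ℝ → ℝ → ℝ) (x t : ℝ) : ℝ :=
  (γ - 1) / (γ * (γ + 1)) * etaP K γ τ x t ^ (1 + 2 * ε / (γ - 1)) * pdx (mF cv S) x t
/-- directional derivatives of `η` along characteristics for full Euler. -/
theorem fullEuler_eta_characteristic_derivatives
    (K cv γ : ℝ) (hK : 0 < K) (hcv : 0 < cv) (hγ : 1 < γ)
    (Ω : Set (ℝ × ℝ)) (hΩ : IsOpen Ω)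
    (u τ S : ℝ → ℝ → ℝ)
    (hu_reg : ContDiffOn ℝ 1 (fun p : ℝ × ℝ => u p.1 p.2) Ω)
    (hτ_reg : ContDiffOn ℝ 1 (fun p : ℝ × ℝ => τ p.1 p.2) Ω)
    (hS_reg : ContDiffOn ℝ 1 (fun p : ℝ × ℝ => S p.1 p.2) Ω)
    (hτ_pos : ∀ p ∈ Ω, 0 < τ p.1 p.2)
    (hpde : ∀ p ∈ Ω, fullEuler K cv γ u τ S p.1 p.2) :
    ∀ p ∈ Ω,
      pdt (etaP K γ τ) p.1 p.2 + cF K cv γ τ S p.1 p.2 * pdx (etaP K γ τ) p.1 p.2 =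
        -(KcC K γ) * etaP K γ τ p.1 p.2 ^ ((γ + 1) / (γ - 1)) * betaF K cv γ u τ S p.1 p.2 -
          (γ - 1) / γ * KcC K γ * etaP K γ τ p.1 p.2 ^ (2 * γ / (γ - 1)) *
            pdx (mF cv S) p.1 p.2 ∧
      pdt (etaP K γ τ) p.1 p.2 - cF K cv γ τ S p.1 p.2 * pdx (etaP K γ τ) p.1 p.2 =
        -(KcC K γ) * etaP K γ τ p.1 p.2 ^ ((γ + 1) / (γ - 1)) * alphaF K cv γ u τ S p.1 p.2 +
          (γ - 1) / γ * KcC K γ * etaP K γ τ p.1 p.2 ^ (2 * γ / (γ - 1)) *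
            pdx (mF cv S) p.1 p.2 := by
  rintro ⟨x, t⟩ hp
  obtain ⟨hτt, -, -⟩ := hpde (x, t) hp
  simp only at hτt ⊢
  have hτpos : 0 < τ x t := hτ_pos (x, t) hp
  have hγ1 : (0:ℝ) < γ - 1 := by linarith
  have hγne : γ - 1 ≠ 0 := hγ1.ne'
  have hc0 : 0 < Real.sqrt (K * γ) := Real.sqrt_pos.mpr (by positivity)
  have hA : (0:ℝ) < 2 * Real.sqrt (K * γ) / (γ - 1) := div_pos (by positivity) hγ1
  have hηpos : 0 < etaP K γ τ x t :=
    mul_pos hA (Real.rpow_pos_of_pos hτpos _)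
  -- time derivative of τ along the vertical line
  have hline : HasDerivAt (fun s => τ x s) (pdt τ x t) t := by
    have h2 : DifferentiableAt ℝ (fun s : ℝ => ((x, s) : ℝ × ℝ)) t :=
      (differentiableAt_const x).prodMk differentiableAt_id
    have hτdiff : DifferentiableAt ℝ (fun q : ℝ × ℝ => τ q.1 q.2) (x, t) :=
      (hτ_reg.differentiableOn one_ne_zero).differentiableAt (hΩ.mem_nhds hp)
    have h1 : DifferentiableAt ℝ (fun s => τ x s) t := by
      exact hτdiff.comp t h2
    unfold pdt
    exact h1.hasDerivAt
  -- time derivative of η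
  have hderiv : HasDerivAt (fun s => etaP K γ τ x s)
      (2 * Real.sqrt (K * γ) / (γ - 1) *
        (pdt τ x t * (-(γ - 1) / 2) * τ x t ^ (-(γ - 1) / 2 - 1))) t := by
    have := (hline.rpow_const (p := -(γ - 1) / 2) (Or.inl hτpos.ne')).const_mul
      (2 * Real.sqrt (K * γ) / (γ - 1))
    simpa [etaP] using this
  have hτt' : pdt τ x t = pdx u x t := by linarith
  have hηt : pdt (etaP K γ τ) x t
      = -(Real.sqrt (K * γ) * τ x t ^ (-(γ + 1) / 2)) * pdx u x t := by
    unfold pdt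
    rw [hderiv.deriv, hτt', show -(γ - 1) / 2 - 1 = -(γ + 1) / 2 by ring]
    field_simp
  -- key constant identity
  have h1 : KcC K γ * etaP K γ τ x t ^ ((γ + 1) / (γ - 1))
      = Real.sqrt (K * γ) * τ x t ^ (-(γ + 1) / 2) := by
    unfold KcC KtauC etaP
    rw [← Real.rpow_mul hA.le,
      Real.mul_rpow hA.le (Real.rpow_pos_of_pos hτpos _).le,
      ← Real.rpow_mul hτpos.le,
      show 2 / (γ - 1) * (-(γ + 1) / 2) = -((γ + 1) / (γ - 1)) by field_simp,
      show -(γ - 1) / 2 * ((γ + 1) / (γ - 1)) = -(γ + 1) / 2 by field_simp,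
      Real.rpow_neg hA.le]
    have hAe : (2 * Real.sqrt (K * γ) / (γ - 1)) ^ ((γ + 1) / (γ - 1)) ≠ 0 :=
      (Real.rpow_pos_of_pos hA _).ne'
    field_simp
  have h3 : etaP K γ τ x t ^ (2 * γ / (γ - 1))
      = etaP K γ τ x t ^ ((γ + 1) / (γ - 1)) * etaP K γ τ x t := by
    rw [show 2 * γ / (γ - 1) = (γ + 1) / (γ - 1) + 1 by field_simp; ring,
      Real.rpow_add_one hηpos.ne']
  refine ⟨?_, ?_⟩ <;>
  · simp only [cF, betaF, alphaF]
    rw [h3, hηt]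
    linear_combination (pdx u x t) * h1
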